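/- Let G be a finite simple graph and let (C₁,F₁) and (C₂,F₂) be antlers in G. Then (C₁ \ (C₂ ∪ F₂), F₁ \ (C₂ ∪ F₂)) is an antler in the graph G − (C₂ ∪ F₂). -/

import Mathlib

variable {V : Type*}

/-- The subgraph of `G` with edges restricted to the vertex set `S`
(kept on the same vertex type; vertices outside `S` become isolated).
Used to model the induced subgraph `G[S]` and vertex deletion `G - X = G[Xᶜ]`. -/
def graphRestrict (G : SimpleGraph V) (S : Set V) : SimpleGraph V where
  Adj u v := G.Adj u v ∧ u ∈ S ∧ v ∈ S
  symm := ⟨fun _ _ h => ⟨h.1.symm, h.2.2, h.2.1⟩⟩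
  loopless := ⟨fun v h => G.loopless.irrefl v h.1⟩

/-- `X` is a feedback vertex set of `G`: deleting `X` leaves an acyclic graph. -/
def IsFVS (G : SimpleGraph V) (X : Set V) : Prop :=
  (graphRestrict G Xᶜ).IsAcyclic

/-- The feedback vertex number of `G`: the minimum size of a feedback vertex set. -/
noncomputable def fvs (G : SimpleGraph V) : ℕ :=
  sInf {n | ∃ X : Set V, IsFVS G X ∧ X.ncard = n}

/-- `X` is a minimum feedback vertex set of `G`. -/
def IsMinFVS (G : SimpleGraph V) (X : Set V) : Prop :=
  IsFVS G X ∧ ∀ Y : Set V, IsFVS G Y → X.ncard ≤ Y.ncard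

/-- `(C, F)` is a feedback vertex cut in `G`: `C` and `F` are disjoint, `G[F]` is a
forest, and every tree of `G[F]` has at most one edge to `V(G) \ (C ∪ F)` (i.e. any two
edges from the same component of `G[F]` to the outside coincide). -/
def IsFVC (G : SimpleGraph V) (C F : Set V) : Prop :=
  Disjoint C F ∧ (graphRestrict G F).IsAcyclic ∧
    ∀ u₁ u₂ w₁ w₂ : V, u₁ ∈ F → u₂ ∈ F →
      (graphRestrict G F).Reachable u₁ u₂ →
      w₁ ∉ C ∪ F → w₂ ∉ C ∪ F → G.Adj u₁ w₁ → G.Adj u₂ w₂ →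
      u₁ = u₂ ∧ w₁ = w₂

/-- `(C, F)` is an antler in `G`: a feedback vertex cut with `|C| ≤ fvs(G[C ∪ F])`. -/
def IsAntler (G : SimpleGraph V) (C F : Set V) : Prop :=
  IsFVC G C F ∧ C.ncard ≤ fvs (graphRestrict G (C ∪ F))

/-- A graph `H` together with a vertex set `C` "has order `z`" if every connected
component `H'` of `H` satisfies `fvs(H') = |C ∩ V(H')| ≤ z`. -/
def HasCertOrder {W : Type*} (H : SimpleGraph W) (C : Set W) (z : ℕ) : Prop :=
  ∀ v : W,
    fvs (graphRestrict H {u | H.Reachable u v}) = (C ∩ {u | H.Reachable u v}).ncard ∧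
    (C ∩ {u | H.Reachable u v}).ncard ≤ z

/-- `H` is a `C`-certificate in `G`: a subgraph of `G` for which `C` is a minimum
feedback vertex set. -/
def IsCCertificate (G : SimpleGraph V) (C : Set V) (H : G.Subgraph) : Prop :=
  C ⊆ H.verts ∧ IsMinFVS H.coe {u : H.verts | (u : V) ∈ C}

/-- `H` is a `C`-certificate of order `z` in `G`. -/
def IsCCertificateOfOrder (G : SimpleGraph V) (C : Set V) (H : G.Subgraph) (z : ℕ) : Prop :=
  IsCCertificate G C H ∧ HasCertOrder H.coe {u : H.verts | (u : V) ∈ C} z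

/-- `(C, F)` is a `z`-antler in `G`: an antler such that `G[C ∪ F]` contains a
`C`-certificate of order `z`. -/
def IsZAntler (G : SimpleGraph V) (z : ℕ) (C F : Set V) : Prop :=
  IsAntler G C F ∧ ∃ H : G.Subgraph, H.verts ⊆ C ∪ F ∧ IsCCertificateOfOrder G C H z

/-- The function `f_r(x) = 2x³ + 3x² - x`. -/
def fr (x : ℕ) : ℕ := 2 * x ^ 3 + 3 * x ^ 2 - x

/-- A feedback vertex cut `(C, F)` is reducible if `|F| > f_r(|C|)`. -/
def IsReducibleFVC (G : SimpleGraph V) (C F : Set V) : Prop :=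
  IsFVC G C F ∧ fr C.ncard < F.ncard

/-- A feedback vertex cut `(C, F)` is simple if `|F| ≤ 2 f_r(|C|)` and either
`G[F]` is connected, or all trees of `G[F]` have a common neighbor `v` and there is a
single-tree feedback vertex cut `(C, F₂)` with `v ∈ F₂ \ F` and `F ⊆ F₂`. -/
def IsSimpleFVC (G : SimpleGraph V) (C F : Set V) : Prop :=
  IsFVC G C F ∧ F.ncard ≤ 2 * fr C.ncard ∧
    ((G.induce F).Connected ∨
      ∃ v : V,
        (∀ u ∈ F, ∃ u' ∈ F, (graphRestrict G F).Reachable u u' ∧ G.Adj u' v) ∧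
        ∃ F₂ : Set V, IsFVC G C F₂ ∧ (G.induce F₂).Connected ∧ v ∈ F₂ \ F ∧ F ⊆ F₂)

/-- `G` contains a `v`-flower of order `k`: `k` cycles whose vertex sets pairwise
intersect exactly in `{v}`. -/
def HasFlower (G : SimpleGraph V) (v : V) (k : ℕ) : Prop :=
  ∃ c : Fin k → G.Walk v v,
    (∀ i, (c i).IsCycle) ∧
    ∀ i j, i ≠ j → {x | x ∈ (c i).support} ∩ {x | x ∈ (c j).support} = {v}

/-- `G` contains `k` pairwise vertex-disjoint cycles. -/
def HasDisjointCycles (G : SimpleGraph V) (k : ℕ) : Prop :=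
  ∃ (b : Fin k → V) (c : ∀ i, G.Walk (b i) (b i)),
    (∀ i, (c i).IsCycle) ∧
    ∀ i j, i ≠ j → Disjoint {x | x ∈ (c i).support} {x | x ∈ (c j).support}

/-- `(C, F)` is a 1-antler in `G` (self-contained definition): `G[F]` is a forest,
every tree of `G[F]` has at most one edge to `V(G) \ (C ∪ F)`, and `G[C ∪ F]`
contains `|C|` pairwise vertex-disjoint cycles. -/
def IsOneAntler (G : SimpleGraph V) (C F : Set V) : Prop :=
  IsFVC G C F ∧ HasDisjointCycles (graphRestrict G (C ∪ F)) C.ncard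

/-- `C 1, F 1, …, C ℓ, F ℓ` is a `z`-antler-sequence for `G`: the sets are pairwise
disjoint and each `(C i, F i)` is a `z`-antler in `G` minus all earlier sets. -/
def IsAntlerSeq (G : SimpleGraph V) (z ℓ : ℕ) (C F : Fin ℓ → Set V) : Prop :=
  (∀ i j, i ≠ j → Disjoint (C i) (C j)) ∧
  (∀ i j, i ≠ j → Disjoint (F i) (F j)) ∧
  (∀ i j, Disjoint (C i) (F j)) ∧
  ∀ i, IsZAntler (graphRestrict G (⋃ j, ⋃ (_ : j < i), (C j ∪ F j))ᶜ) z (C i) (F i)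

/-! ### Auxiliary lemmas -/

open SimpleGraph

lemma graphRestrict_le {G : SimpleGraph V} {A B : Set V} (h : A ⊆ B) :
    graphRestrict G A ≤ graphRestrict G B :=
  fun _ _ hadj => ⟨hadj.1, h hadj.2.1, h hadj.2.2⟩

lemma graphRestrict_restrict (G : SimpleGraph V) (A B : Set V) :
    graphRestrict (graphRestrict G A) B = graphRestrict G (A ∩ B) := by
  ext u v
  constructor
  · rintro ⟨⟨h, ha, hb⟩, hu, hv⟩; exact ⟨h, ⟨ha, hu⟩, ⟨hb, hv⟩⟩
  · rintro ⟨h, ⟨ha, hu⟩, hb, hv⟩; exact ⟨⟨h, ha, hb⟩, hu, hv⟩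

lemma isAcyclic_mono' {G H : SimpleGraph V} (h : H ≤ G) (hG : G.IsAcyclic) : H.IsAcyclic :=
  fun _ c hc => hG (c.mapLe h) ((SimpleGraph.Walk.mapLe_isCycle h).2 hc)

lemma acyclic_restrict_mono {G : SimpleGraph V} {A B : Set V} (h : A ⊆ B)
    (hB : (graphRestrict G B).IsAcyclic) : (graphRestrict G A).IsAcyclic :=
  isAcyclic_mono' (graphRestrict_le h) hB

lemma isFVS_restrict_iff {G : SimpleGraph V} {S X : Set V} :
    IsFVS (graphRestrict G S) X ↔ (graphRestrict G (S \ X)).IsAcyclic := by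
  unfold IsFVS
  rw [graphRestrict_restrict, Set.diff_eq]

lemma isFVS_univ (G : SimpleGraph V) : IsFVS G Set.univ := by
  intro v c hc
  cases c with
  | nil => exact hc.ne_nil rfl
  | cons h p => exact h.2.1 (Set.mem_univ _)

lemma exists_min_fvs [Fintype V] (G : SimpleGraph V) :
    ∃ X : Set V, IsFVS G X ∧ X.ncard = fvs G :=
  Nat.sInf_mem (⟨_, Set.univ, isFVS_univ G, rfl⟩ :
    {n | ∃ X : Set V, IsFVS G X ∧ X.ncard = n}.Nonempty)

lemma fvs_le_of_isFVS {G : SimpleGraph V} {X : Set V} (h : IsFVS G X) : fvs G ≤ X.ncard :=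
  Nat.sInf_le ⟨X, h, rfl⟩

lemma getVert_eq_support_getElem {G : SimpleGraph V} {u v : V}
    (p : G.Walk u v) : ∀ {i : ℕ} (hi : i < p.support.length), p.support[i] = p.getVert i := by
  induction p with
  | nil =>
    intro i hi
    simp only [Walk.support_nil, List.length_singleton] at hi
    interval_cases i
    simp [Walk.getVert_zero]
  | cons h q ih =>
    intro i hi
    cases i with
    | zero => simp [Walk.support_cons, Walk.getVert_zero]
    | succ k =>
      simp only [Walk.support_cons, Walk.getVert_cons_succ]
      rw [List.getElem_cons_succ]
      exact ih (by simpa [Walk.support_cons] using hi)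

lemma cycle_getVert_injOn {G : SimpleGraph V} {v : V} {c : G.Walk v v} (hc : c.IsCycle) :
    ∀ i j, 1 ≤ i → i ≤ c.length → 1 ≤ j → j ≤ c.length →
      c.getVert i = c.getVert j → i = j := by
  intro i j hi1 hil hj1 hjl hij
  have hnd : c.support.tail.Nodup := ((Walk.isCycle_def _).1 hc).2.2
  have hlen : c.support.length = c.length + 1 := Walk.length_support c
  have hcons : c.support = v :: c.support.tail := by
    rw [← Walk.support_eq_cons]
  have htl : c.support.tail.length = c.length := by
    have := congrArg List.length hcons
    simp only [List.length_cons] at this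
    omega
  have key : ∀ k, 1 ≤ k → (hk : k ≤ c.length) →
      c.support.tail[k - 1]'(by omega) = c.getVert k := by
    intro k hk1 hk
    have h2 : c.support[k]'(by omega) = c.getVert k :=
      getVert_eq_support_getElem c (by omega)
    have h3 : c.support[k]'(by omega)
        = (v :: c.support.tail)[k]'(by simp only [List.length_cons]; omega) :=
      List.getElem_of_eq hcons _
    have h4 : (v :: c.support.tail)[k]'(by simp only [List.length_cons]; omega)
        = c.support.tail[k - 1]'(by omega) := by
      rw [List.getElem_cons, dif_neg (by omega : ¬ k = 0)]
    rw [← h2, h3, h4]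
  have e1 := key i hi1 hil
  have e2 := key j hj1 hjl
  have : c.support.tail[i - 1]'(by omega) = c.support.tail[j - 1]'(by omega) := by
    rw [e1, e2, hij]
  have := List.Nodup.getElem_inj_iff hnd |>.1 this
  omega

lemma cycle_support_mem {G : SimpleGraph V} {U : Set V} {v : V}
    {c : (graphRestrict G U).Walk v v} (hc : c.IsCycle) :
    ∀ x ∈ c.support, x ∈ U := by
  intro x hx
  have hn3 : 3 ≤ c.length := hc.three_le_length
  obtain ⟨m, hm, hmle⟩ := Walk.mem_support_iff_exists_getVert.1 hx
  rcases lt_or_eq_of_le hmle with hlt | heq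
  · exact hm ▸ (c.adj_getVert_succ hlt).2.1
  · have hv : c.getVert 0 ∈ U := (c.adj_getVert_succ (by omega : 0 < c.length)).2.1
    rw [Walk.getVert_zero] at hv
    have : x = v := by rw [← hm, heq, Walk.getVert_length]
    rwa [this]

lemma transfer_isCycle {G H : SimpleGraph V} {v : V} {c : G.Walk v v} (hc : c.IsCycle)
    (h : ∀ e ∈ c.edges, e ∈ H.edgeSet) : (c.transfer H h).IsCycle := by
  have h3 := hc.three_le_length
  rw [Walk.isCycle_def] at hc ⊢
  refine ⟨?_, ?_, ?_⟩
  · rw [Walk.isTrail_def, Walk.edges_transfer]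
    exact hc.1.edges_nodup
  · intro hnil
    have := congrArg List.length (congrArg Walk.support hnil)
    rw [Walk.support_transfer, Walk.length_support] at this
    simp only [Walk.support_nil, List.length_singleton] at this
    omega
  · rw [Walk.support_transfer]
    exact hc.2.2

/-- Key lemma: if `(C, F)` is an FVC in `G`, `U` avoids `C`, and `G[U \ F]` is acyclic,
then there is no cycle in `G[U]` starting outside `F` but meeting `F`. -/
lemma no_mixed_cycle {G : SimpleGraph V} {C F U : Set V}
    (hone : ∀ u₁ u₂ w₁ w₂ : V, u₁ ∈ F → u₂ ∈ F →
      (graphRestrict G F).Reachable u₁ u₂ →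
      w₁ ∉ C ∪ F → w₂ ∉ C ∪ F → G.Adj u₁ w₁ → G.Adj u₂ w₂ → u₁ = u₂ ∧ w₁ = w₂)
    (hUC : ∀ x ∈ U, x ∉ C)
    {v : V} {c : (graphRestrict G U).Walk v v} (hc : c.IsCycle)
    (hv : v ∉ F) (hmix : ∃ y ∈ c.support, y ∈ F) : False := by
  classical
  have hn3 : 3 ≤ c.length := hc.three_le_length
  obtain ⟨y, hys, hyF⟩ := hmix
  obtain ⟨m, hm, hmle⟩ := Walk.mem_support_iff_exists_getVert.1 hys
  have hPm : c.getVert m ∈ F := hm ▸ hyF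
  -- first index in F
  have hex : ∃ k, c.getVert k ∈ F := ⟨m, hPm⟩
  set i := Nat.find hex with hi_def
  have hiF : c.getVert i ∈ F := Nat.find_spec hex
  have hile : i ≤ m := Nat.find_min' hex hPm
  have hi0 : 1 ≤ i := by
    rcases Nat.eq_zero_or_pos i with h0 | h0
    · exfalso; apply hv; rw [← Walk.getVert_zero c, ← h0]; exact hiF
    · exact h0
  have hin : i ≠ c.length := by
    intro h
    apply hv
    rw [← Walk.getVert_length c, ← h]
    exact hiF
  have hin' : i ≤ c.length - 1 := by omega
  -- first exit index j ≥ i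
  have hex2 : ∃ k, i ≤ k ∧ c.getVert (k + 1) ∉ F := by
    refine ⟨c.length - 1, by omega, ?_⟩
    have : c.length - 1 + 1 = c.length := by omega
    rw [this, Walk.getVert_length]
    exact hv
  set j := Nat.find hex2 with hj_def
  obtain ⟨hij, hjF⟩ : i ≤ j ∧ c.getVert (j + 1) ∉ F := Nat.find_spec hex2
  have hjle : j ≤ c.length - 1 := Nat.find_min' hex2 ⟨by omega, by
    have : c.length - 1 + 1 = c.length := by omega
    rw [this, Walk.getVert_length]; exact hv⟩
  -- all vertices in segment [i, j] are in F
  have hseg : ∀ k, i ≤ k → k ≤ j → c.getVert k ∈ F := by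
    intro k h1 h2
    rcases eq_or_lt_of_le h1 with rfl | hlt
    · exact hiF
    · have hmin := Nat.find_min hex2 (show k - 1 < j by omega)
      push_neg at hmin
      have := hmin (by omega)
      have hk : k - 1 + 1 = k := by omega
      rwa [hk] at this
  -- reachability along the segment
  have hreach : ∀ k, i ≤ k → k ≤ j → (graphRestrict G F).Reachable (c.getVert i) (c.getVert k) := by
    intro k hk
    induction k, hk using Nat.le_induction with
    | base => intro _; exact Reachable.refl _
    | succ n hn ih =>
      intro hsucc
      have h1 : (graphRestrict G F).Adj (c.getVert n) (c.getVert (n + 1)) := by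
        refine ⟨(c.adj_getVert_succ (by omega : n < c.length)).1, ?_, ?_⟩
        · exact hseg n hn (by omega)
        · exact hseg (n + 1) (by omega) hsucc
      exact (ih (by omega)).trans h1.reachable
  -- the two boundary edges
  obtain ⟨k, hk⟩ : ∃ k, i = k + 1 := ⟨i - 1, by omega⟩
  have hkn : k < c.length := by omega
  have hjn : j < c.length := by omega
  have a1 : (graphRestrict G U).Adj (c.getVert k) (c.getVert i) := by
    rw [hk]; exact c.adj_getVert_succ hkn
  have a2 : (graphRestrict G U).Adj (c.getVert j) (c.getVert (j + 1)) := c.adj_getVert_succ hjn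
  have hw1F : c.getVert k ∉ F := Nat.find_min hex (by omega)
  have hw1 : c.getVert k ∉ C ∪ F := by
    intro h
    rcases h with h | h
    · exact hUC _ a1.2.1 h
    · exact hw1F h
  have hw2 : c.getVert (j + 1) ∉ C ∪ F := by
    intro h
    rcases h with h | h
    · exact hUC _ a2.2.2 h
    · exact hjF h
  obtain ⟨hu, hw⟩ := hone (c.getVert i) (c.getVert j) (c.getVert k) (c.getVert (j + 1))
    hiF (hseg j hij le_rfl) (hreach j hij le_rfl) hw1 hw2 a1.1.symm a2.1
  -- derive the contradiction from injectivity of getVert on a cycle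
  have inj := cycle_getVert_injOn hc
  rcases Nat.eq_zero_or_pos k with hk0 | hk0
  · -- k = 0, so i = 1
    subst hk0
    rw [Walk.getVert_zero] at hw
    have hvn : c.getVert c.length = v := Walk.getVert_length c
    have h1 : j + 1 = c.length := by
      refine (inj (j + 1) c.length (by omega) (by omega) (by omega) le_rfl ?_).symm ▸ rfl
      rw [hvn, ← hw]
    have h2 : i = j := inj i j hi0 (by omega) (by omega) (by omega) hu
    omega
  · have : k = j + 1 := inj k (j + 1) hk0 (by omega) (by omega) (by omega) hw
    omega

/-- The fundamental FVC lemma: if `(C,F)` is an FVC in `G`, `U` is disjoint from `C`,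
and `G[U \ F]` is acyclic, then `G[U]` is acyclic. -/
lemma fvc_acyclic_extend {G : SimpleGraph V} {C F U : Set V}
    (hFVC : IsFVC G C F) (hUC : ∀ x ∈ U, x ∉ C)
    (hac : (graphRestrict G (U \ F)).IsAcyclic) :
    (graphRestrict G U).IsAcyclic := by
  classical
  intro v c hc
  have hsupU : ∀ x ∈ c.support, x ∈ U := cycle_support_mem hc
  by_cases hmix : ∃ y ∈ c.support, y ∈ F
  · by_cases hall : ∀ y ∈ c.support, y ∈ F
    · -- transfer to G[F]: contradiction with the forest condition
      have hedges : ∀ e ∈ c.edges, e ∈ (graphRestrict G F).edgeSet := by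
        intro e he
        induction e with
        | h a b =>
          have hadj := Walk.adj_of_mem_edges c he
          exact ⟨hadj.1, hall _ (Walk.fst_mem_support_of_mem_edges c he),
            hall _ (Walk.snd_mem_support_of_mem_edges c he)⟩
      exact hFVC.2.1 _ (transfer_isCycle hc hedges)
    · push_neg at hall
      obtain ⟨x, hxs, hxF⟩ := hall
      -- rotate the cycle to start at x ∉ F
      have hc2 := hc.rotate hxs
      obtain ⟨y, hys, hyF⟩ := hmix
      have hyx : y ≠ x := fun h => hxF (h ▸ hyF)
      -- y is in the tail of c.support
      have hnotnil : ¬ c.Nil := hc.not_nil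
      have hytail : y ∈ c.support.tail := by
        rw [Walk.support_eq_cons] at hys
        rcases List.mem_cons.1 hys with rfl | h
        · rw [← Walk.support_tail_of_not_nil _ hnotnil]
          exact Walk.end_mem_support _
        · exact h
      have hyrot : y ∈ (c.rotate x hxs).support := by
        have hperm := Walk.support_rotate c x hxs
        exact List.mem_of_mem_tail (hperm.mem_iff.2 hytail)
      exact no_mixed_cycle hFVC.2.2 hUC hc2 hxF ⟨y, hyrot, hyF⟩
  · -- no vertex in F: transfer to G[U \ F]
    push_neg at hmix
    have hedges : ∀ e ∈ c.edges, e ∈ (graphRestrict G (U \ F)).edgeSet := by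
      intro e he
      induction e with
      | h a b =>
        have hadj := Walk.adj_of_mem_edges c he
        have ha := Walk.fst_mem_support_of_mem_edges c he
        have hb := Walk.snd_mem_support_of_mem_edges c he
        exact ⟨hadj.1, ⟨hsupU _ ha, hmix _ ha⟩, ⟨hsupU _ hb, hmix _ hb⟩⟩
    exact hac _ (transfer_isCycle hc hedges)

/-- Exchange lemma: replacing the part of an FVS inside an antler by `C` preserves
the FVS property and does not increase the size. -/
lemma antler_exchange [Fintype V] {G : SimpleGraph V} {C F S Y : Set V}
    (hA : IsAntler G C F) (hCF : C ∪ F ⊆ S)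
    (hY : IsFVS (graphRestrict G S) Y) :
    IsFVS (graphRestrict G S) ((Y \ (C ∪ F)) ∪ C) ∧
      ((Y \ (C ∪ F)) ∪ C).ncard ≤ Y.ncard := by
  have hYac : (graphRestrict G (S \ Y)).IsAcyclic := isFVS_restrict_iff.1 hY
  constructor
  · rw [isFVS_restrict_iff]
    apply fvc_acyclic_extend hA.1
    · intro x hx hxC
      exact hx.2 (Set.mem_union_right _ hxC)
    · apply acyclic_restrict_mono _ hYac
      intro x hx
      obtain ⟨⟨hxS, hx1⟩, hxF⟩ := hx
      refine ⟨hxS, fun hxY => hx1 (Set.mem_union_left _ ⟨hxY, fun h => ?_⟩)⟩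
      rcases h with h | h
      · exact hx1 (Set.mem_union_right _ h)
      · exact hxF h
  · -- cardinality
    have hC_le : C.ncard ≤ (Y ∩ (C ∪ F)).ncard := by
      refine le_trans hA.2 (fvs_le_of_isFVS ?_)
      rw [isFVS_restrict_iff]
      apply acyclic_restrict_mono _ hYac
      intro x hx
      refine ⟨hCF hx.1, fun hxY => hx.2 ⟨hxY, hx.1⟩⟩
    calc ((Y \ (C ∪ F)) ∪ C).ncard ≤ (Y \ (C ∪ F)).ncard + C.ncard :=
          Set.ncard_union_le _ _
      _ ≤ (Y \ (C ∪ F)).ncard + (Y ∩ (C ∪ F)).ncard := by omega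
      _ = Y.ncard := by
          rw [add_comm]
          exact Set.ncard_inter_add_ncard_diff_eq_ncard Y (C ∪ F) (Set.toFinite _)

theorem stmt5 [Fintype V] (G : SimpleGraph V) (C₁ F₁ C₂ F₂ : Set V)
    (h₁ : IsAntler G C₁ F₁) (h₂ : IsAntler G C₂ F₂) :
    IsAntler (graphRestrict G (C₂ ∪ F₂)ᶜ) (C₁ \ (C₂ ∪ F₂)) (F₁ \ (C₂ ∪ F₂)) := by
  set C₁' := C₁ \ (C₂ ∪ F₂) with hC₁'
  set F₁' := F₁ \ (C₂ ∪ F₂) with hF₁'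
  have hrw : graphRestrict (graphRestrict G (C₂ ∪ F₂)ᶜ) (C₁' ∪ F₁')
      = graphRestrict G (C₁' ∪ F₁') := by
    rw [graphRestrict_restrict]
    congr 1
    ext x
    constructor
    · rintro ⟨_, hx⟩; exact hx
    · intro hx
      refine ⟨?_, hx⟩
      rcases hx with hx | hx
      · exact hx.2
      · exact hx.2
  constructor
  · -- FVC part
    refine ⟨Set.disjoint_of_subset Set.diff_subset Set.diff_subset h₁.1.1, ?_, ?_⟩
    · rw [graphRestrict_restrict]
      apply acyclic_restrict_mono _ h₁.1.2.1
      intro x hx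
      exact hx.2.1
    · intro u₁ u₂ w₁ w₂ hu₁ hu₂ hreach hw₁ hw₂ ha₁ ha₂
      have hle : graphRestrict (graphRestrict G (C₂ ∪ F₂)ᶜ) F₁' ≤ graphRestrict G F₁ := by
        rw [graphRestrict_restrict]
        exact graphRestrict_le (fun x hx => hx.2.1)
      have hreach' : (graphRestrict G F₁).Reachable u₁ u₂ := hreach.mono hle
      have hnotin : ∀ w : V, w ∈ (C₂ ∪ F₂)ᶜ → w ∉ C₁' ∪ F₁' → w ∉ C₁ ∪ F₁ := by
        intro w hwc hw h
        rcases h with h | h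
        · exact hw (Set.mem_union_left _ ⟨h, hwc⟩)
        · exact hw (Set.mem_union_right _ ⟨h, hwc⟩)
      exact h₁.1.2.2 u₁ u₂ w₁ w₂ hu₁.1 hu₂.1 hreach'
        (hnotin w₁ ha₁.2.2 hw₁) (hnotin w₂ ha₂.2.2 hw₂) ha₁.1 ha₂.1
  · -- antler size part
    rw [hrw]
    -- set up the union graph
    set S := (C₁ ∪ F₁) ∪ (C₂ ∪ F₂) with hS
    obtain ⟨Y, hY, hYcard⟩ := exists_min_fvs (graphRestrict G S)
    obtain ⟨hY₁, hY₁le⟩ := antler_exchange h₁ Set.subset_union_left hY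
    obtain ⟨hY₂, hY₂le⟩ := antler_exchange h₂ Set.subset_union_right hY₁
    set Y₁ := (Y \ (C₁ ∪ F₁)) ∪ C₁ with hY₁def
    set Y₂ := (Y₁ \ (C₂ ∪ F₂)) ∪ C₂ with hY₂def
    -- lower bound: C₁' ∪ C₂ ⊆ Y₂, disjointly
    have hsub : C₁' ∪ C₂ ⊆ Y₂ := by
      intro x hx
      rcases hx with hx | hx
      · exact Set.mem_union_left _ ⟨Set.mem_union_right _ hx.1, hx.2⟩
      · exact Set.mem_union_right _ hx
    have hdisj : Disjoint C₁' C₂ := by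
      rw [Set.disjoint_left]
      intro x hx hx2
      exact hx.2 (Set.mem_union_left _ hx2)
    have hlb : C₁'.ncard + C₂.ncard ≤ Y₂.ncard := by
      rw [← Set.ncard_union_eq hdisj (Set.toFinite _) (Set.toFinite _)]
      exact Set.ncard_le_ncard hsub (Set.toFinite _)
    -- Y₂ has size ≤ fvs (G[S])
    have hY₂fvs : Y₂.ncard ≤ fvs (graphRestrict G S) := by
      calc Y₂.ncard ≤ Y₁.ncard := hY₂le
        _ ≤ Y.ncard := hY₁le
        _ = fvs (graphRestrict G S) := hYcard
    -- upper bound: fvs (G[S]) ≤ fvs (G[C₁' ∪ F₁']) + |C₂|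
    obtain ⟨X, hX, hXcard⟩ := exists_min_fvs (graphRestrict G (C₁' ∪ F₁'))
    have hXac : (graphRestrict G ((C₁' ∪ F₁') \ X)).IsAcyclic := isFVS_restrict_iff.1 hX
    have hub : fvs (graphRestrict G S) ≤ fvs (graphRestrict G (C₁' ∪ F₁')) + C₂.ncard := by
      have hXC₂ : IsFVS (graphRestrict G S) (X ∪ C₂) := by
        rw [isFVS_restrict_iff]
        apply fvc_acyclic_extend h₂.1
        · intro x hx hxC
          exact hx.2 (Set.mem_union_right _ hxC)
        · apply acyclic_restrict_mono _ hXac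
          intro x hx
          obtain ⟨⟨hxS, hx1⟩, hxF₂⟩ := hx
          have hxC₂ : x ∉ C₂ := fun h => hx1 (Set.mem_union_right _ h)
          have hxX : x ∉ X := fun h => hx1 (Set.mem_union_left _ h)
          have hxCF₂ : x ∉ C₂ ∪ F₂ := by
            intro h; rcases h with h | h
            · exact hxC₂ h
            · exact hxF₂ h
          have hxS' : x ∈ C₁ ∪ F₁ := by
            rcases hxS with h | h
            · exact h
            · exact absurd h hxCF₂
          refine ⟨?_, hxX⟩
          rcases hxS' with h | h
          · exact Set.mem_union_left _ ⟨h, hxCF₂⟩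
          · exact Set.mem_union_right _ ⟨h, hxCF₂⟩
      calc fvs (graphRestrict G S) ≤ (X ∪ C₂).ncard := fvs_le_of_isFVS hXC₂
        _ ≤ X.ncard + C₂.ncard := Set.ncard_union_le _ _
        _ = fvs (graphRestrict G (C₁' ∪ F₁')) + C₂.ncard := by rw [hXcard]
    omega
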